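/- With α = −id on V (the usual grading automorphism, the parity involution), the product a ∨_α b on Cℓ_{p,q} defined by extending v ∨_α a = v ∧ a − v ⌟ a satisfies a ∨_α b = b₀a₀ + b₀a₁ + b₁a₀ − b₁a₁ for all a, b, where aᵢ, bᵢ denote the even/odd parts with respect to the usual Z₂-grading; and (Λ(V), ∨_α) is isomorphic to Cℓ_{q,p} (the opposite-signature Clifford algebra). -/

import Mathlib

open CliffordAlgebra

namespace TiltAux

variable {V : Type*} [AddCommGroup V] [Module ℝ V] {Q : QuadraticForm ℝ V}

noncomputable def ev (a : CliffordAlgebra Q) : CliffordAlgebra Q :=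
  (1/2 : ℝ) • (a + involute a)

noncomputable def od (a : CliffordAlgebra Q) : CliffordAlgebra Q :=
  (1/2 : ℝ) • (a - involute a)

lemma ev_add_od (a : CliffordAlgebra Q) : ev a + od a = a := by
  unfold ev od; module

lemma ev_sub_od (a : CliffordAlgebra Q) : ev a - od a = involute a := by
  unfold ev od; module

lemma involute_ev (a : CliffordAlgebra Q) : involute (ev a) = ev a := by
  unfold ev; simp [smul_add]; abel

lemma involute_od (a : CliffordAlgebra Q) : involute (od a) = - od a := by
  unfold od; simp [smul_sub]

lemma ev_add (a b : CliffordAlgebra Q) : ev (a + b) = ev a + ev b := by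
  unfold ev; simp; module

lemma od_add (a b : CliffordAlgebra Q) : od (a + b) = od a + od b := by
  unfold od; simp; module

lemma ev_smul (r : ℝ) (a : CliffordAlgebra Q) : ev (r • a) = r • ev a := by
  unfold ev; simp [smul_add, smul_smul, mul_comm]

lemma od_smul (r : ℝ) (a : CliffordAlgebra Q) : od (r • a) = r • od a := by
  unfold od; simp [smul_sub, smul_smul, mul_comm]

lemma ev_involute (a : CliffordAlgebra Q) : ev (involute a) = ev a := by
  unfold ev; simp; module

lemma od_involute (a : CliffordAlgebra Q) : od (involute a) = - od a := by
  unfold od; simp; module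

lemma ev_of_inv (a : CliffordAlgebra Q) (h : involute a = a) : ev a = a := by
  unfold ev; rw [h]; module

lemma od_of_inv (a : CliffordAlgebra Q) (h : involute a = a) : od a = 0 := by
  unfold od; rw [h]; module

lemma ev_one : ev (1 : CliffordAlgebra Q) = 1 := ev_of_inv 1 (map_one _)
lemma od_one : od (1 : CliffordAlgebra Q) = 0 := od_of_inv 1 (map_one _)

lemma ev_ι (v : V) : ev (ι Q v) = 0 := by unfold ev; rw [involute_ι]; module
lemma od_ι (v : V) : od (ι Q v) = ι Q v := by unfold od; rw [involute_ι]; module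

lemma ev_mul (a b : CliffordAlgebra Q) :
    ev (a * b) = ev a * ev b + od a * od b := by
  unfold ev od
  rw [map_mul, smul_mul_smul_comm, smul_mul_smul_comm]
  simp only [mul_add, add_mul, mul_sub, sub_mul]
  module

lemma od_mul (a b : CliffordAlgebra Q) :
    od (a * b) = ev a * od b + od a * ev b := by
  unfold ev od
  rw [map_mul, smul_mul_smul_comm, smul_mul_smul_comm]
  simp only [mul_add, add_mul, mul_sub, sub_mul]
  module


noncomputable def tmul (a b : CliffordAlgebra Q) : CliffordAlgebra Q :=
  ev b * a + od b * involute a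

lemma tmul_one_right (a : CliffordAlgebra Q) : tmul a 1 = a := by
  unfold tmul; rw [ev_one, od_one]; simp

lemma tmul_one_left (b : CliffordAlgebra Q) : tmul 1 b = b := by
  unfold tmul; rw [map_one, mul_one, mul_one, ev_add_od]

lemma involute_tmul (a b : CliffordAlgebra Q) :
    involute (tmul a b) = tmul (involute a) (involute b) := by
  unfold tmul
  rw [map_add, map_mul, map_mul, involute_ev, involute_od, ev_involute,
    od_involute, involute_involute]

lemma tmul_add_left (a b c : CliffordAlgebra Q) :
    tmul (a + b) c = tmul a c + tmul b c := by
  unfold tmul; rw [map_add]; simp only [mul_add]; abel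

lemma tmul_add_right (a b c : CliffordAlgebra Q) :
    tmul a (b + c) = tmul a b + tmul a c := by
  unfold tmul; rw [ev_add, od_add]; simp only [add_mul]; abel

lemma tmul_smul_left (r : ℝ) (a c : CliffordAlgebra Q) :
    tmul (r • a) c = r • tmul a c := by
  unfold tmul; rw [map_smul]; simp [mul_smul_comm, smul_add]

lemma tmul_smul_right (r : ℝ) (a c : CliffordAlgebra Q) :
    tmul a (r • c) = r • tmul a c := by
  unfold tmul; rw [ev_smul, od_smul]; simp [smul_mul_assoc, smul_add]

lemma tmul_assoc (x y z : CliffordAlgebra Q) :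
    tmul (tmul x y) z = tmul x (tmul y z) := by
  have key : tmul (tmul x y) z
      = (ev z * ev y - od z * od y) * x + (ev z * od y + od z * ev y) * involute x := by
    unfold tmul
    rw [map_add, map_mul, map_mul, involute_ev, involute_od, involute_involute]
    simp only [mul_add, add_mul, sub_mul, neg_mul, mul_neg, mul_assoc]
    abel
  rw [key]
  unfold tmul
  rw [ev_add, od_add, ev_mul, od_mul, ev_mul, od_mul,
    ev_of_inv _ (involute_ev z), od_of_inv _ (involute_ev z),
    ev_involute, od_involute]
  have h1 : ev (od z) = 0 := by
    unfold ev od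
    rw [map_smul, map_sub, involute_involute]
    module
  have h2 : od (od z) = od z := by
    unfold od; simp [smul_sub, smul_smul]; module
  rw [h1, h2]
  simp only [zero_mul, mul_zero, mul_neg, neg_mul, zero_add, add_zero, mul_assoc]
  abel

lemma tmul_zero_left (c : CliffordAlgebra Q) : tmul 0 c = 0 := by
  unfold tmul; simp

lemma tmul_zero_right (c : CliffordAlgebra Q) : tmul c 0 = 0 := by
  unfold tmul; rw [ev_of_inv 0 (by simp), od_of_inv 0 (by simp)]; simp


lemma tmul_key (a z : CliffordAlgebra Q) (v : V) :
    tmul (involute a * ι Q v) z = involute (tmul a z) * ι Q v := by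
  unfold tmul
  rw [map_mul, involute_involute, involute_ι, map_add, map_mul, map_mul,
    involute_ev, involute_od, involute_involute]
  simp only [mul_neg, neg_mul, add_mul, mul_assoc]

lemma tmul_neg_left (a c : CliffordAlgebra Q) : tmul (-a) c = - tmul a c := by
  rw [← neg_one_smul ℝ a, tmul_smul_left, neg_one_smul]

/-- Type synonym carrying the tilt product. -/
def Tilt (Q : QuadraticForm ℝ V) : Type _ := CliffordAlgebra Q

instance : AddCommGroup (Tilt Q) := inferInstanceAs (AddCommGroup (CliffordAlgebra Q))
instance : Module ℝ (Tilt Q) := inferInstanceAs (Module ℝ (CliffordAlgebra Q))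

noncomputable instance : Ring (Tilt Q) where
  __ := (inferInstance : AddCommGroup (Tilt Q))
  mul a b := tmul (Q := Q) a b
  one := (1 : CliffordAlgebra Q)
  mul_assoc := tmul_assoc
  one_mul := tmul_one_left
  mul_one := tmul_one_right
  left_distrib a b c := tmul_add_right a b c
  right_distrib a b c := tmul_add_left a b c
  zero_mul := tmul_zero_left
  mul_zero := tmul_zero_right

lemma tilt_mul_def (a b : Tilt Q) : a * b = tmul (Q := Q) a b := rfl
lemma tilt_one_def : (1 : Tilt Q) = (1 : CliffordAlgebra Q) := rfl

noncomputable instance : Algebra ℝ (Tilt Q) :=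
  Algebra.ofModule (fun r a b => tmul_smul_left r a b) (fun r a b => tmul_smul_right r a b)

lemma tilt_algebraMap (r : ℝ) :
    (algebraMap ℝ (Tilt Q) r : CliffordAlgebra Q) = algebraMap ℝ (CliffordAlgebra Q) r := by
  show r • (1 : CliffordAlgebra Q) = _
  rw [Algebra.algebraMap_eq_smul_one]

variable (Q) in
noncomputable def ιT : V →ₗ[ℝ] Tilt Q := ι Q

variable (Q) in
noncomputable def tiltHom {Q' : QuadraticForm ℝ V} (h : ∀ v, Q' v = - Q v) :
    CliffordAlgebra Q' →ₐ[ℝ] Tilt Q :=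
  lift Q' ⟨ιT Q, by
    intro v
    show tmul (ι Q v) (ι Q v) = (algebraMap ℝ (Tilt Q) (Q' v) : CliffordAlgebra Q)
    rw [tilt_algebraMap, h v, map_neg]
    unfold tmul
    rw [ev_ι, od_ι, involute_ι, zero_mul, zero_add, mul_neg, ι_sq_scalar]⟩

variable {Q' : QuadraticForm ℝ V} (h : ∀ v, Q' v = - Q v)

lemma tiltHom_ι (v : V) : (tiltHom Q h (ι Q' v) : CliffordAlgebra Q) = ι Q v := by
  unfold tiltHom; rw [lift_ι_apply]; rfl

lemma tiltHom_algebraMap (r : ℝ) :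
    (tiltHom Q h (algebraMap ℝ _ r) : CliffordAlgebra Q) = algebraMap ℝ _ r := by
  rw [AlgHom.commutes, tilt_algebraMap]

lemma tiltHom_mul' (x y : CliffordAlgebra Q') :
    (tiltHom Q h (x * y) : CliffordAlgebra Q)
      = tmul (tiltHom Q h x) (tiltHom Q h y) := by
  rw [map_mul]; rfl

lemma tiltHom_involute (x : CliffordAlgebra Q') :
    (tiltHom Q h (involute x) : CliffordAlgebra Q) = involute (tiltHom Q h x) := by
  induction x using CliffordAlgebra.induction with
  | algebraMap r =>
      rw [AlgHom.commutes involute r, tiltHom_algebraMap h, tilt_algebraMap,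
        AlgHom.commutes involute r]
  | ι v =>
      rw [involute_ι, map_neg, tiltHom_ι h, involute_ι]; rfl
  | mul a b ha hb =>
      rw [map_mul involute a b, tiltHom_mul' h, ha, hb]
      exact (involute_tmul _ _).symm.trans (congrArg involute (tiltHom_mul' h a b).symm)
  | add a b ha hb =>
      simp only [map_add, ha, hb]
      exact (map_add involute _ _).symm


lemma tiltHom_ev (x : CliffordAlgebra Q') :
    (tiltHom Q h (ev x) : CliffordAlgebra Q) = ev (tiltHom Q h x) := by
  unfold ev; rw [map_smul, map_add, tiltHom_involute h]; rfl

lemma tiltHom_od (x : CliffordAlgebra Q') :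
    (tiltHom Q h (od x) : CliffordAlgebra Q) = od (tiltHom Q h x) := by
  unfold od; rw [map_smul, map_sub, tiltHom_involute h]; rfl

lemma tiltHom_tmul (x y : CliffordAlgebra Q') :
    (tiltHom Q h (tmul x y) : CliffordAlgebra Q)
      = @HMul.hMul (CliffordAlgebra Q) (CliffordAlgebra Q) (CliffordAlgebra Q) instHMul
          (tiltHom Q h x) (tiltHom Q h y) := by
  unfold tmul
  rw [map_add, tiltHom_mul' h, tiltHom_mul' h, tiltHom_ev h, tiltHom_od h,
    tiltHom_involute h]
  set X : CliffordAlgebra Q := (tiltHom Q h x : CliffordAlgebra Q)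
  set Y : CliffordAlgebra Q := (tiltHom Q h y : CliffordAlgebra Q)
  unfold tmul
  rw [involute_ev, involute_od, ev_involute, od_involute]
  conv_rhs => rw [← ev_add_od X, ← ev_add_od Y]
  simp only [mul_neg, neg_mul, neg_neg, add_mul, mul_add]
  rfl

variable (h' : ∀ v, Q v = - Q' v)

lemma tilt_roundtrip (a : CliffordAlgebra Q) :
    (tiltHom Q h (tiltHom Q' h' a : CliffordAlgebra Q') : CliffordAlgebra Q) = a := by
  induction a using CliffordAlgebra.induction with
  | algebraMap r =>
      rw [tiltHom_algebraMap h', tilt_algebraMap, tiltHom_algebraMap h, tilt_algebraMap]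
  | ι v => rw [tiltHom_ι h', tiltHom_ι h]
  | mul a b ha hb =>
      rw [tiltHom_mul' h']
      exact (tiltHom_tmul h _ _).trans (by rw [ha, hb])
  | add a b ha hb =>
    rw [map_add]
    exact (map_add (tiltHom Q h) _ _).trans (by rw [ha, hb]; rfl)

end TiltAux

open TiltAux

/-- With `α = -id` on `V` (the usual grading automorphism, whose extension to
`Cℓ_{p,q}` is the parity involution `involute`), the tilt product `∨_α` —
the associative unital bilinear product generated by
`v ∨_α a = v ∧ a - v ⌟ a`, which on the Clifford algebra reads
`v ∨_α a = â v` — satisfies `a ∨_α b = b₀a₀ + b₀a₁ + b₁a₀ - b₁a₁` for all `a, b`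
(`aᵢ, bᵢ` the even/odd parts for the usual grading); and `(Λ(V), ∨_α)` is
isomorphic as a real algebra to the Clifford algebra of the opposite metric. -/
theorem tilt_product_formula_and_opposite_signature
    {V : Type*} [AddCommGroup V] [Module ℝ V] [FiniteDimensional ℝ V]
    (B : LinearMap.BilinForm ℝ V) (hsymm : B.IsSymm) (hnd : B.Nondegenerate)
    (P : CliffordAlgebra B.toQuadraticMap → CliffordAlgebra B.toQuadraticMap →
      CliffordAlgebra B.toQuadraticMap)
    (hlin₁ : ∀ a, IsLinearMap ℝ (P a))
    (hlin₂ : ∀ b, IsLinearMap ℝ (fun a => P a b))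
    (hassoc : ∀ x y z, P (P x y) z = P x (P y z))
    (hone₁ : ∀ a, P 1 a = a) (hone₂ : ∀ a, P a 1 = a)
    (hgen : ∀ (v : V) (a : CliffordAlgebra B.toQuadraticMap),
      P (ι B.toQuadraticMap v) a = involute a * ι B.toQuadraticMap v) :
    (∀ a b : CliffordAlgebra B.toQuadraticMap,
      P a b =
        ((1 / 2 : ℝ) • (b + involute b)) * ((1 / 2 : ℝ) • (a + involute a)) +
        ((1 / 2 : ℝ) • (b + involute b)) * ((1 / 2 : ℝ) • (a - involute a)) +
        ((1 / 2 : ℝ) • (b - involute b)) * ((1 / 2 : ℝ) • (a + involute a)) -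
        ((1 / 2 : ℝ) • (b - involute b)) * ((1 / 2 : ℝ) • (a - involute a))) ∧
    ∃ F : CliffordAlgebra (-B).toQuadraticMap ≃ₗ[ℝ] CliffordAlgebra B.toQuadraticMap,
      F 1 = 1 ∧ ∀ x y, F (x * y) = P (F x) (F y) := by
  let Q : QuadraticForm ℝ V := B.toQuadraticMap
  let Q' : QuadraticForm ℝ V := (-B).toQuadraticMap
  have h : ∀ v, Q' v = - Q v := by
    intro v
    show (-B).toQuadraticMap v = - B.toQuadraticMap v
    simp
  have h' : ∀ v, Q v = - Q' v := fun v => by rw [h v, neg_neg]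
  -- Part 1: P = tmul
  have hgen' : ∀ (v : V) (a : CliffordAlgebra Q), P (ι Q v) a = tmul (ι Q v) a := by
    intro v a
    rw [hgen]
    unfold tmul
    rw [involute_ι, mul_neg, ← ev_sub_od, sub_mul]
    abel
  have hclos : ∀ a : CliffordAlgebra Q, (∀ z, P a z = tmul a z) →
      ∀ (v : V) (z : CliffordAlgebra Q),
        P (involute a * ι Q v) z = tmul (involute a * ι Q v) z := by
    intro a ha v z
    have h1 := hassoc (ι Q v) a z
    rw [hgen, hgen, ha, ← tmul_key] at h1
    exact h1
  set Mp : CliffordAlgebra Q → Prop := fun a =>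
    (∀ z, P a z = tmul a z) ∧ (∀ z, P (involute a) z = tmul (involute a) z) with hMp
  have h1' : Mp 1 := by
    constructor <;> intro z
    · rw [hone₁, tmul_one_left]
    · rw [map_one, hone₁, tmul_one_left]
  have hadd : ∀ a b, Mp a → Mp b → Mp (a + b) := by
    intro a b ha hb
    constructor <;> intro z
    · rw [(hlin₂ z).map_add, ha.1, hb.1, tmul_add_left]
    · rw [map_add, (hlin₂ z).map_add, ha.2, hb.2, tmul_add_left]
  have hι' : ∀ v : V, Mp (ι Q v) := by
    intro v
    constructor <;> intro z
    · exact hgen' v z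
    · rw [involute_ι, ← neg_one_smul ℝ (ι Q v), (hlin₂ z).map_smul, hgen' v z,
        tmul_smul_left]
  have hmulι : ∀ a, Mp a → ∀ v : V, Mp (a * ι Q v) := by
    intro a ha v
    constructor <;> intro z
    · have := hclos (involute a) ha.2 v z
      rwa [involute_involute] at this
    · have heq : involute (a * ι Q v) = -(involute a * ι Q v) := by
        rw [map_mul, involute_ι, mul_neg]
      rw [heq, ← neg_one_smul ℝ (involute a * ι Q v), (hlin₂ z).map_smul,
        hclos a ha.1 v z, tmul_smul_left]
  have main : ∀ c a : CliffordAlgebra Q, Mp a → Mp (a * c) := by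
    intro c
    induction c using CliffordAlgebra.induction with
    | algebraMap r =>
        intro a ha
        have : a * algebraMap ℝ (CliffordAlgebra Q) r = r • a := by
          rw [← Algebra.commutes, ← Algebra.smul_def]
        rw [this]
        constructor <;> intro z
        · rw [(hlin₂ z).map_smul, ha.1, tmul_smul_left]
        · rw [map_smul, (hlin₂ z).map_smul, ha.2, tmul_smul_left]
    | ι v => exact fun a ha => hmulι a ha v
    | mul c d hc hd => intro a ha; rw [← mul_assoc]; exact hd _ (hc _ ha)
    | add c d hc hd =>
        intro a ha
        rw [mul_add]
        exact hadd _ _ (hc _ ha) (hd _ ha)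
  have hP : ∀ a b : CliffordAlgebra Q, P a b = tmul a b := by
    intro a b
    have := (main a 1 h1').1 b
    rwa [one_mul] at this
  have hfor : ∀ a b : CliffordAlgebra Q,
      P a b =
        ((1 / 2 : ℝ) • (b + involute b)) * ((1 / 2 : ℝ) • (a + involute a)) +
        ((1 / 2 : ℝ) • (b + involute b)) * ((1 / 2 : ℝ) • (a - involute a)) +
        ((1 / 2 : ℝ) • (b - involute b)) * ((1 / 2 : ℝ) • (a + involute a)) -
        ((1 / 2 : ℝ) • (b - involute b)) * ((1 / 2 : ℝ) • (a - involute a)) := by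
    intro a b
    rw [hP a b]
    unfold tmul ev od
    simp only [smul_mul_assoc, mul_smul_comm, mul_add, add_mul, mul_sub, sub_mul,
      smul_add, smul_sub]
    module
  refine ⟨hfor, ?_⟩
  -- Part 2
  refine ⟨{ toFun := fun x => (tiltHom Q h x : CliffordAlgebra Q),
            map_add' := fun x y => map_add _ x y,
            map_smul' := fun r x => map_smul _ r x,
            invFun := fun a => (tiltHom Q' h' a : CliffordAlgebra Q'),
            left_inv := fun x => tilt_roundtrip h' h x,
            right_inv := fun a => tilt_roundtrip h h' a }, ?_, ?_⟩
  · show (tiltHom Q h 1 : CliffordAlgebra Q) = 1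
    rw [map_one]
  · intro x y
    show (tiltHom Q h (x * y) : CliffordAlgebra Q) = _
    rw [tiltHom_mul' h, hP]
    rfl
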